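/- arXiv:1304.4117 — 4 statements merged into one kernel-verified Lean document; each statement's English description precedes it below -/
import Mathlib

section
/- Let G be an infinite discrete group and let μ be an irreducible probability measure on G. Then for every f ∈ c₀(G), the sup norms ‖f ⋆ μ^{⋆n}‖_∞ converge to 0 as n → ∞; that is, the convolution operators f ↦ f ⋆ μ^{⋆n} on c₀(G) converge to zero in the strong operator topology. -/
open Filter Topology
open scoped Classical

variable {G : Type*}

/-- Convolution of two summable "measures" (functions) on a discrete group:
`(ν ⋆ μ)(g) = ∑_{a·b=g} ν(a) μ(b)`. -/
noncomputable def mconv [Group G] (ν μ : G → ℝ) : G → ℝ :=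
  fun g => ∑' a : G, ν a * μ (a⁻¹ * g)

/-- The `n`-th convolution power of `μ`, with `convPow μ 0 = δ_e` and `convPow μ 1 = μ`. -/
noncomputable def convPow [Group G] (μ : G → ℝ) : ℕ → G → ℝ
  | 0 => fun g => if g = 1 then 1 else 0
  | n + 1 => mconv (convPow μ n) μ

/-- `μ` is a probability measure on the discrete group `G`. -/
def IsProbMeas [Group G] (μ : G → ℝ) : Prop :=
  (∀ g, 0 ≤ μ g) ∧ HasSum μ 1

/-- `μ` is irreducible: every point is charged by some convolution power `μ^{⋆n}`, `n ≥ 1`. -/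
def MeasIrreducible [Group G] (μ : G → ℝ) : Prop :=
  ∀ g : G, ∃ n : ℕ, 1 ≤ n ∧ 0 < convPow μ n g

/-- The convolution action of a measure `μ` on a function `f ∈ c₀(G)`:
`(f ⋆ μ)(g) = ∑_h f(g·h) μ(h)`. -/
noncomputable def actConv [Group G] (f : G → ℂ) (μ : G → ℝ) : G → ℂ :=
  fun g => ∑' h : G, f (g * h) * (μ h : ℂ)

/-- A function on a discrete space vanishes at infinity iff it tends to `0`
along the cofinite filter. -/
def ZeroAtInfty (f : G → ℂ) : Prop := Tendsto f cofinite (𝓝 0)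


section ConcentrationHelpers
variable [Group G]

lemma hasSum_invMul {μ : G → ℝ} {s : ℝ} (h : HasSum μ s) (g : G) :
    HasSum (fun a : G => μ (a⁻¹ * g)) s := by
  have := (Equiv.hasSum_iff ((Equiv.inv G).trans (Equiv.mulRight g)) (f := μ) (a := s)).2 h
  simpa [Function.comp_def] using this

lemma hasSum_mulShift {μ : G → ℝ} {s : ℝ} (h : HasSum μ s) (x : G) :
    HasSum (fun b : G => μ (x * b)) s := by
  have := (Equiv.hasSum_iff (Equiv.mulLeft x) (f := μ) (a := s)).2 h
  simpa [Function.comp_def] using this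

lemma prob_le_one {μ : G → ℝ} (h : IsProbMeas μ) (g : G) : μ g ≤ 1 :=
  le_hasSum h.2 g (fun b _ => h.1 b)

lemma mconv_prob {ν μ : G → ℝ} (hν : IsProbMeas ν) (hμ : IsProbMeas μ) :
    IsProbMeas (mconv ν μ) := by
  -- summability of the two-variable function
  have hterm : ∀ a : G, Summable fun b => ν a * μ (a⁻¹ * b) :=
    fun a => ((hasSum_mulShift hμ.2 a⁻¹).summable).mul_left (ν a)
  have hinner : ∀ a : G, (∑' b, ν a * μ (a⁻¹ * b)) = ν a := by
    intro a
    rw [tsum_mul_left, (hasSum_mulShift hμ.2 a⁻¹).tsum_eq, mul_one]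
  have hF : Summable fun p : G × G => ν p.1 * μ (p.1⁻¹ * p.2) := by
    rw [summable_prod_of_nonneg (by
      intro p; exact mul_nonneg (hν.1 _) (hμ.1 _))]
    refine ⟨fun a => hterm a, ?_⟩
    apply Summable.congr hν.2.summable
    intro a; exact (hinner a).symm
  have htsum : (∑' p : G × G, ν p.1 * μ (p.1⁻¹ * p.2)) = 1 := by
    rw [Summable.tsum_prod' hF hterm]
    calc (∑' a, ∑' b, ν a * μ (a⁻¹ * b)) = ∑' a, ν a := by
          exact tsum_congr hinner
      _ = 1 := hν.2.tsum_eq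
  have hF1 : HasSum (fun p : G × G => ν p.1 * μ (p.1⁻¹ * p.2)) 1 := htsum ▸ hF.hasSum
  have hF1' : HasSum (fun p : G × G => ν p.2 * μ (p.2⁻¹ * p.1)) 1 := by
    have := (Equiv.hasSum_iff (Equiv.prodComm G G)
      (f := fun p : G × G => ν p.1 * μ (p.1⁻¹ * p.2)) (a := 1)).2 hF1
    simpa [Function.comp_def] using this
  constructor
  · intro g; exact tsum_nonneg (fun a => mul_nonneg (hν.1 _) (hμ.1 _))
  · refine HasSum.prod_fiberwise hF1' (fun g => ?_)
    exact (hF1'.summable.prod_factor g).hasSum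

lemma convPow_prob {μ : G → ℝ} (hμ : IsProbMeas μ) (n : ℕ) : IsProbMeas (convPow μ n) := by
  induction n with
  | zero =>
      constructor
      · intro g; dsimp [convPow]; positivity
      · simpa [convPow] using hasSum_ite_eq (1 : G) (1 : ℝ)
  | succ n ih => exact mconv_prob ih hμ

lemma convPow_add {μ : G → ℝ} (hμ : IsProbMeas μ) (m n : ℕ) (g : G) :
    convPow μ (m + n) g = ∑' a, convPow μ m a * convPow μ n (a⁻¹ * g) := by
  induction n generalizing g with
  | zero =>
      rw [tsum_eq_single g]
      · simp [convPow]
      · intro b hb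
        simp [convPow, inv_mul_eq_one, hb]
  | succ n ih =>
      have hPm := convPow_prob hμ m
      have hPn := convPow_prob hμ n
      have hPmn := convPow_prob hμ (m + n)
      -- notation
      set P := convPow μ with hP
      have hterm : ∀ a : G, Summable fun b => P n (a⁻¹ * b) * μ (b⁻¹ * g) := by
        intro a
        refine Summable.of_nonneg_of_le (fun b => mul_nonneg (hPn.1 _) (hμ.1 _))
          (fun b => ?_) ((hasSum_mulShift hPn.2 a⁻¹).summable)
        calc P n (a⁻¹ * b) * μ (b⁻¹ * g) ≤ P n (a⁻¹ * b) * 1 :=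
              mul_le_mul_of_nonneg_left (prob_le_one hμ _) (hPn.1 _)
          _ = P n (a⁻¹ * b) := mul_one _
      have hinner_le : ∀ a : G, (∑' b, P n (a⁻¹ * b) * μ (b⁻¹ * g)) ≤ 1 := by
        intro a
        calc (∑' b, P n (a⁻¹ * b) * μ (b⁻¹ * g)) ≤ ∑' b, P n (a⁻¹ * b) := by
              refine Summable.tsum_le_tsum (fun b => ?_) (hterm a)
                ((hasSum_mulShift hPn.2 a⁻¹).summable)
              calc P n (a⁻¹ * b) * μ (b⁻¹ * g) ≤ P n (a⁻¹ * b) * 1 :=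
                    mul_le_mul_of_nonneg_left (prob_le_one hμ _) (hPn.1 _)
                _ = P n (a⁻¹ * b) := mul_one _
          _ = 1 := (hasSum_mulShift hPn.2 a⁻¹).tsum_eq
      have hinner_nonneg : ∀ a : G, 0 ≤ (∑' b, P n (a⁻¹ * b) * μ (b⁻¹ * g)) :=
        fun a => tsum_nonneg (fun b => mul_nonneg (hPn.1 _) (hμ.1 _))
      -- the two-variable function
      set F : G → G → ℝ := fun a b => P m a * (P n (a⁻¹ * b) * μ (b⁻¹ * g)) with hF
      have hFa : ∀ a, Summable (F a) := fun a => (hterm a).mul_left (P m a)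
      have hFb : ∀ b, Summable fun a => F a b := by
        intro b
        refine Summable.of_nonneg_of_le
          (fun a => mul_nonneg (hPm.1 _) (mul_nonneg (hPn.1 _) (hμ.1 _)))
          (fun a => ?_) (hPm.2.summable.mul_right (μ (b⁻¹ * g)))
        calc F a b ≤ P m a * (1 * μ (b⁻¹ * g)) := by
              refine mul_le_mul_of_nonneg_left ?_ (hPm.1 _)
              exact mul_le_mul_of_nonneg_right (prob_le_one hPn _) (hμ.1 _)
          _ = P m a * μ (b⁻¹ * g) := by rw [one_mul]
      have hFunc : Summable (Function.uncurry F) := by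
        rw [summable_prod_of_nonneg (by
          intro p
          exact mul_nonneg (hPm.1 _) (mul_nonneg (hPn.1 _) (hμ.1 _)))]
        refine ⟨fun a => hFa a, ?_⟩
        refine Summable.of_nonneg_of_le
          (fun a => tsum_nonneg (fun b => mul_nonneg (hPm.1 _)
            (mul_nonneg (hPn.1 _) (hμ.1 _))))
          (fun a => ?_) hPm.2.summable
        simp only [Function.uncurry]
        rw [show (fun b => F a b) = fun b => P m a * (P n (a⁻¹ * b) * μ (b⁻¹ * g)) from rfl,
          tsum_mul_left]
        calc P m a * (∑' b, P n (a⁻¹ * b) * μ (b⁻¹ * g)) ≤ P m a * 1 :=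
              mul_le_mul_of_nonneg_left (hinner_le a) (hPm.1 _)
          _ = P m a := mul_one _
      -- main computation
      have step1 : convPow μ (m + (n + 1)) g = ∑' b, P (m + n) b * μ (b⁻¹ * g) := by
        show mconv (P (m + n)) μ g = _
        rfl
      rw [show convPow μ (m + (n + 1)) g = mconv (convPow μ (m+n)) μ g from rfl] at step1
      rw [show P (m + (n + 1)) g = mconv (convPow μ (m+n)) μ g from rfl, step1]
      have step2 : (∑' b, P (m + n) b * μ (b⁻¹ * g)) = ∑' b, ∑' a, F a b := by
        refine tsum_congr (fun b => ?_)
        rw [ih b, ← tsum_mul_right]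
        exact tsum_congr (fun a => by ring)
      rw [step2, Summable.tsum_comm' hFunc hFa hFb]
      refine tsum_congr (fun a => ?_)
      rw [show (fun b => F a b) = fun b => P m a * (P n (a⁻¹ * b) * μ (b⁻¹ * g)) from rfl,
        tsum_mul_left]
      congr 1
      -- ∑' b, P n (a⁻¹ b) * μ (b⁻¹ g) = P (n+1) (a⁻¹ g)
      show (∑' b, P n (a⁻¹ * b) * μ (b⁻¹ * g)) = mconv (P n) μ (a⁻¹ * g)
      rw [show mconv (P n) μ (a⁻¹ * g) = ∑' y, P n y * μ (y⁻¹ * (a⁻¹ * g)) from rfl]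
      rw [← (Equiv.mulLeft a).tsum_eq (fun b => P n (a⁻¹ * b) * μ (b⁻¹ * g))]
      refine tsum_congr (fun y => ?_)
      simp [mul_assoc]

lemma convPow_pos_mul {μ : G → ℝ} (hμ : IsProbMeas μ) {m n : ℕ} {x y : G}
    (hx : 0 < convPow μ m x) (hy : 0 < convPow μ n y) :
    0 < convPow μ (m + n) (x * y) := by
  have hPm := convPow_prob hμ m
  have hPn := convPow_prob hμ n
  have hsumm : Summable fun a => convPow μ m a * convPow μ n (a⁻¹ * (x * y)) := by
    refine Summable.of_nonneg_of_le (fun a => mul_nonneg (hPm.1 _) (hPn.1 _))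
      (fun a => ?_) hPm.2.summable
    calc convPow μ m a * convPow μ n (a⁻¹ * (x * y)) ≤ convPow μ m a * 1 :=
          mul_le_mul_of_nonneg_left (prob_le_one hPn _) (hPm.1 _)
      _ = convPow μ m a := mul_one _
  have hle := Summable.le_tsum hsumm x (fun b _ => mul_nonneg (hPm.1 _) (hPn.1 _))
  rw [← convPow_add hμ m n (x * y)] at hle
  refine lt_of_lt_of_le ?_ hle
  have : x⁻¹ * (x * y) = y := by group
  rw [this]
  exact mul_pos hx hy

lemma sup_convPow_tendsto_zero [Infinite G] {μ : G → ℝ}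
    (hμ : IsProbMeas μ) (hirr : MeasIrreducible μ) :
    Tendsto (fun n : ℕ => ⨆ g : G, convPow μ n g) atTop (𝓝 0) := by
  have : Nonempty G := ⟨1⟩
  set P := convPow μ with hPdef
  have hP : ∀ n, IsProbMeas (P n) := convPow_prob hμ
  set Q : ℕ → ℝ := fun n => ⨆ g : G, P n g with hQdef
  have hbdd : ∀ n, BddAbove (Set.range (P n)) := by
    intro n
    refine ⟨1, ?_⟩
    rintro _ ⟨g, rfl⟩
    exact prob_le_one (hP n) g
  have hQle : ∀ n g, P n g ≤ Q n := fun n g => le_ciSup (hbdd n) g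
  have hQ0 : ∀ n, 0 ≤ Q n := fun n => le_trans ((hP n).1 1) (hQle n 1)
  -- antitone
  have hanti : Antitone Q := by
    refine antitone_nat_of_succ_le (fun n => ?_)
    refine ciSup_le (fun g => ?_)
    have h1 : P (n + 1) g = ∑' a, P n a * μ (a⁻¹ * g) := rfl
    rw [h1]
    have hsl : Summable fun a => P n a * μ (a⁻¹ * g) := by
      refine Summable.of_nonneg_of_le (fun a => mul_nonneg ((hP n).1 _) (hμ.1 _))
        (fun a => ?_) (hP n).2.summable
      calc P n a * μ (a⁻¹ * g) ≤ P n a * 1 :=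
            mul_le_mul_of_nonneg_left (prob_le_one hμ _) ((hP n).1 _)
        _ = P n a := mul_one _
    calc (∑' a, P n a * μ (a⁻¹ * g)) ≤ ∑' a, Q n * μ (a⁻¹ * g) := by
          refine Summable.tsum_le_tsum (fun a => ?_) hsl
            (((hasSum_invMul hμ.2 g)).summable.mul_left (Q n))
          exact mul_le_mul_of_nonneg_right (hQle n a) (hμ.1 _)
      _ = Q n * 1 := by rw [tsum_mul_left, (hasSum_invMul hμ.2 g).tsum_eq]
      _ = Q n := mul_one _
  set c : ℝ := ⨅ n, Q n with hcdef
  have hbddb : BddBelow (Set.range Q) := by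
    refine ⟨0, ?_⟩; rintro _ ⟨n, rfl⟩; exact hQ0 n
  have htend : Tendsto Q atTop (𝓝 c) := tendsto_atTop_ciInf hanti hbddb
  have hcQ : ∀ n, c ≤ Q n := fun n => ciInf_le hbddb n
  have hc0 : 0 ≤ c := le_ciInf hQ0
  -- main claim: c = 0
  rcases eq_or_lt_of_le hc0 with hc | hc
  · rwa [← hc] at htend
  -- suppose 0 < c, derive False
  exfalso
  set K : ℕ := ⌈2 / c⌉₊ with hKdef
  -- cardinality bound on supports
  have hcard : ∀ (m : ℕ) (T : Finset G), (∀ x ∈ T, 0 < P m x) → T.card ≤ K := by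
    intro m T hT
    by_contra hlt
    push_neg at hlt
    obtain ⟨T', hT'sub, hT'card⟩ := T.exists_subset_card_eq hlt
    have hT'ne : T'.Nonempty := Finset.card_pos.1 (by omega)
    set δ : ℝ := T'.inf' hT'ne (P m) with hδdef
    have hδpos : 0 < δ := by
      rw [hδdef, Finset.lt_inf'_iff]
      exact fun x hx => hT x (hT'sub hx)
    set ε : ℝ := δ * c / 8 with hεdef
    have hεpos : 0 < ε := by positivity
    obtain ⟨N, hN⟩ : ∃ N, Q N < c + ε := by
      refine exists_lt_of_ciInf_lt ?_
      rw [← hcdef]; linarith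
    obtain ⟨g, hg⟩ : ∃ g, c - ε < P (m + N) g := by
      refine exists_lt_of_lt_ciSup ?_
      calc c - ε < c := by linarith
        _ ≤ Q (m + N) := hcQ _
    -- key sum identity
    have hsub2 : Summable fun a => P m a * P N (a⁻¹ * g) := by
      refine Summable.of_nonneg_of_le (fun a => mul_nonneg ((hP m).1 _) ((hP N).1 _))
        (fun a => ?_) (hP m).2.summable
      calc P m a * P N (a⁻¹ * g) ≤ P m a * 1 :=
            mul_le_mul_of_nonneg_left (prob_le_one (hP N) _) ((hP m).1 _)
        _ = P m a := mul_one _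
    have hsum2 : HasSum (fun a => P m a * P N (a⁻¹ * g)) (P (m + N) g) := by
      have := hsub2.hasSum
      rwa [← convPow_add hμ m N g] at this
    have hsum1 : HasSum (fun a => P m a * Q N) (1 * Q N) := (hP m).2.mul_right _
    have hkey : HasSum (fun a => P m a * (Q N - P N (a⁻¹ * g))) (1 * Q N - P (m + N) g) := by
      have h := hsum1.sub hsum2
      have heq : (fun a => P m a * (Q N - P N (a⁻¹ * g)))
          = fun a => P m a * Q N - P m a * P N (a⁻¹ * g) := by
        funext a; ring
      rw [heq]
      exact h
    have hkeylt : (∑' a, P m a * (Q N - P N (a⁻¹ * g))) < 2 * ε := by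
      rw [hkey.tsum_eq]
      have h1 : Q N < c + ε := hN
      linarith
    -- every point of T' maps to a heavy point of P N
    have hheavy : ∀ x ∈ T', c / 2 < P N (x⁻¹ * g) := by
      intro x hx
      have hδx : δ ≤ P m x := Finset.inf'_le _ hx
      have hterm : P m x * (Q N - P N (x⁻¹ * g)) ≤ ∑' a, P m a * (Q N - P N (a⁻¹ * g)) := by
        refine Summable.le_tsum hkey.summable x (fun b _ => ?_)
        exact mul_nonneg ((hP m).1 _) (by linarith [hQle N (b⁻¹ * g)])
      have hnn : 0 ≤ Q N - P N (x⁻¹ * g) := by linarith [hQle N (x⁻¹ * g)]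
      have hδterm : δ * (Q N - P N (x⁻¹ * g)) ≤ P m x * (Q N - P N (x⁻¹ * g)) :=
        mul_le_mul_of_nonneg_right hδx hnn
      have h2ε : 2 * ε = δ * c / 4 := by rw [hεdef]; ring
      have : δ * (Q N - P N (x⁻¹ * g)) < δ * c / 4 := by
        rw [← h2ε]; exact lt_of_le_of_lt (le_trans hδterm hterm) hkeylt
      have hQNc : c ≤ Q N := hcQ N
      nlinarith
    -- image finset of heavy points
    set T'' : Finset G := T'.image (fun x => x⁻¹ * g) with hT''def
    have hinj : Function.Injective (fun x : G => x⁻¹ * g) := by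
      intro x y hxy
      simpa using congrArg (fun z => (z * g⁻¹)⁻¹) hxy
    have hT''card : T''.card = K + 1 := by
      rw [hT''def, Finset.card_image_of_injective _ hinj, hT'card]
    have hheavy' : ∀ y ∈ T'', c / 2 < P N y := by
      intro y hy
      rw [hT''def, Finset.mem_image] at hy
      obtain ⟨x, hx, rfl⟩ := hy
      exact hheavy x hx
    have hsumle : (∑ y ∈ T'', P N y) ≤ 1 := by
      have := (hP N).2.summable.sum_le_tsum T'' (fun b _ => (hP N).1 b)
      rwa [(hP N).2.tsum_eq] at this
    have hsumge : (K + 1 : ℝ) * (c / 2) ≤ ∑ y ∈ T'', P N y := by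
      calc (K + 1 : ℝ) * (c / 2) = ∑ _y ∈ T'', (c / 2) := by
            rw [Finset.sum_const, hT''card, nsmul_eq_mul]; push_cast; ring
        _ ≤ ∑ y ∈ T'', P N y := Finset.sum_le_sum (fun y hy => (hheavy' y hy).le)
    have hKge : (2 / c : ℝ) ≤ K := Nat.le_ceil _
    have h1 : (2 / c) * (c / 2) = 1 := by field_simp
    nlinarith
  -- supports and irreducibility now give that G is finite
  obtain ⟨n₀, hn₀1, hn₀pos⟩ := hirr 1
  have hstep : ∀ m x, 0 < P m x → 0 < P (m + n₀) x := by
    intro m x hx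
    have := convPow_pos_mul hμ hx hn₀pos
    rwa [mul_one] at this
  -- the W sets
  set A : ℕ → ℕ → Set G := fun j k => {x | 0 < P (1 + j + k * n₀) x} with hAdef
  have hAmono : ∀ j, Monotone (A j) := by
    intro j
    refine monotone_nat_of_le_succ (fun k x hx => ?_)
    have hidx : 1 + j + (k + 1) * n₀ = (1 + j + k * n₀) + n₀ := by ring
    simp only [hAdef, Set.mem_setOf_eq] at hx ⊢
    rw [hidx]
    exact hstep _ x hx
  have hWfin : ∀ j, (⋃ k, A j k).Finite := by
    intro j
    by_contra hinf
    rw [← Set.not_infinite, not_not] at hinf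
    obtain ⟨T, hTsub, hTcard⟩ := hinf.exists_subset_card_eq (K + 1)
    have hchoice : ∀ x ∈ T, ∃ k, x ∈ A j k := by
      intro x hx
      exact Set.mem_iUnion.1 (hTsub hx)
    set κ : G → ℕ := fun x => if h : ∃ k, x ∈ A j k then Nat.find h else 0 with hκdef
    set N := T.sup κ with hNdef
    have hTin : ∀ x ∈ T, x ∈ A j N := by
      intro x hx
      have h := hchoice x hx
      have h1 : x ∈ A j (κ x) := by
        rw [hκdef]; simp only [h, dif_pos]
        exact Nat.find_spec h
      exact hAmono j (Finset.le_sup hx) h1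
    have := hcard (1 + j + N * n₀) T (fun x hx => hTin x hx)
    omega
  -- G is covered by finitely many W's
  have hcover : (Set.univ : Set G) ⊆ ⋃ j ∈ Finset.range n₀, ⋃ k, A j k := by
    intro g _
    obtain ⟨m, hm1, hmpos⟩ := hirr g
    have hdm := Nat.div_add_mod' (m - 1) n₀
    refine Set.mem_biUnion (x := (m - 1) % n₀)
      (Finset.mem_coe.2 (Finset.mem_range.2 (Nat.mod_lt _ (by omega)))) ?_
    refine Set.mem_iUnion.2 ⟨(m - 1) / n₀, ?_⟩
    simp only [hAdef, Set.mem_setOf_eq]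
    have hidx : 1 + (m - 1) % n₀ + ((m - 1) / n₀) * n₀ = m := by
      omega
    rw [hidx]
    exact hmpos
  have hfin : (Set.univ : Set G).Finite :=
    Set.Finite.subset (Set.Finite.biUnion (Finset.range n₀).finite_toSet
      (fun j _ => hWfin j)) hcover
  exact Set.infinite_univ hfin

/-- pointwise bound for the action of a probability measure on a c₀ function -/
lemma actConv_bound {ν : G → ℝ} (hν : IsProbMeas ν) {f : G → ℂ} {C ε' Qb : ℝ}
    (hC0 : 0 ≤ C) (hC : ∀ x, ‖f x‖ ≤ C) (s : Finset G)
    (hs : ∀ x ∉ s, ‖f x‖ ≤ ε') (hε' : 0 ≤ ε')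
    (hQb : ∀ h, ν h ≤ Qb) (g : G) :
    ‖actConv f ν g‖ ≤ ε' + C * s.card * Qb := by
  have hQb0 : 0 ≤ Qb := le_trans (hν.1 1) (hQb 1)
  have hnorm : ∀ h : G, ‖f (g * h) * (ν h : ℂ)‖ = ‖f (g * h)‖ * ν h := by
    intro h
    rw [norm_mul, Complex.norm_real, Real.norm_eq_abs, abs_of_nonneg (hν.1 h)]
  have hsumnorm : Summable fun h => ‖f (g * h) * (ν h : ℂ)‖ := by
    refine Summable.of_nonneg_of_le (fun h => norm_nonneg _) (fun h => ?_)
      (hν.2.summable.mul_left C)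
    rw [hnorm h]
    exact mul_le_mul_of_nonneg_right (hC _) (hν.1 h)
  have h1 : ‖actConv f ν g‖ ≤ ∑' h, ‖f (g * h) * (ν h : ℂ)‖ :=
    norm_tsum_le_tsum_norm hsumnorm
  set s' : Finset G := s.image (fun x => g⁻¹ * x) with hs'def
  have hoff : ∀ h ∉ s', (if g * h ∈ s then C * Qb else 0) = 0 := by
    intro h hh
    rw [if_neg]
    intro hmem
    exact hh (Finset.mem_image.2 ⟨g * h, hmem, by group⟩)
  have hsum2 : Summable fun h => (if g * h ∈ s then C * Qb else 0 : ℝ) :=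
    summable_of_ne_finset_zero hoff
  have h2 : (∑' h, ‖f (g * h) * (ν h : ℂ)‖)
      ≤ ∑' h, (ε' * ν h + if g * h ∈ s then C * Qb else 0) := by
    refine Summable.tsum_le_tsum (fun h => ?_) hsumnorm ((hν.2.summable.mul_left ε').add hsum2)
    rw [hnorm h]
    by_cases hmem : g * h ∈ s
    · rw [if_pos hmem]
      have : ‖f (g * h)‖ * ν h ≤ C * Qb := by
        exact mul_le_mul (hC _) (hQb h) (hν.1 h) hC0
      nlinarith [mul_nonneg hε' (hν.1 h)]
    · rw [if_neg hmem, add_zero]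
      exact mul_le_mul_of_nonneg_right (hs _ hmem) (hν.1 h)
  have h3 : (∑' h, (ε' * ν h + if g * h ∈ s then C * Qb else 0))
      = ε' + ∑ h ∈ s', (if g * h ∈ s then C * Qb else 0 : ℝ) := by
    rw [Summable.tsum_add (hν.2.summable.mul_left ε') hsum2, tsum_mul_left, hν.2.tsum_eq, mul_one,
      tsum_eq_sum hoff]
  have h4 : (∑ h ∈ s', (if g * h ∈ s then C * Qb else 0 : ℝ)) ≤ C * s.card * Qb := by
    calc (∑ h ∈ s', (if g * h ∈ s then C * Qb else 0 : ℝ))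
        ≤ ∑ _h ∈ s', C * Qb := by
          refine Finset.sum_le_sum (fun h _ => ?_)
          split_ifs
          · exact le_refl _
          · positivity
      _ = s'.card * (C * Qb) := by rw [Finset.sum_const, nsmul_eq_mul]
      _ ≤ s.card * (C * Qb) := by
          have := Finset.card_image_le (s := s) (f := fun x => g⁻¹ * x)
          have h5 : (s'.card : ℝ) ≤ s.card := by exact_mod_cast this
          exact mul_le_mul_of_nonneg_right h5 (by positivity)
      _ = C * s.card * Qb := by ring
  linarith


end ConcentrationHelpers

/-- For an infinite discrete group `G` and an irreducible probability
measure `μ` on `G`, the convolution operators `f ↦ f ⋆ μ^{⋆n}` on `c₀(G)` converge to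
zero in the strong operator topology: `‖f ⋆ μ^{⋆n}‖_∞ → 0` for every `f ∈ c₀(G)`. -/
theorem concentration_c0 [Group G] [Infinite G] (μ : G → ℝ)
    (hμ : IsProbMeas μ) (hirr : MeasIrreducible μ)
    (f : G → ℂ) (hf : ZeroAtInfty f) :
    Tendsto (fun n : ℕ => ⨆ g : G, ‖actConv f (convPow μ n) g‖) atTop (𝓝 0) := by
  have hne : Nonempty G := ⟨1⟩
  have hQtend := sup_convPow_tendsto_zero hμ hirr
  set P := convPow μ with hPdef
  have hP : ∀ n, IsProbMeas (P n) := convPow_prob hμ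
  set Q : ℕ → ℝ := fun n => ⨆ g : G, P n g with hQdef
  have hbdd : ∀ n, BddAbove (Set.range (P n)) := by
    intro n
    exact ⟨1, by rintro _ ⟨g, rfl⟩; exact prob_le_one (hP n) g⟩
  have hQle : ∀ n g, P n g ≤ Q n := fun n g => le_ciSup (hbdd n) g
  have hQ0 : ∀ n, 0 ≤ Q n := fun n => le_trans ((hP n).1 1) (hQle n 1)
  -- a uniform bound on f
  obtain ⟨C, hC0, hC⟩ : ∃ C, 0 ≤ C ∧ ∀ x, ‖f x‖ ≤ C := by
    have h1 : {x : G | ¬ ‖f x‖ < 1}.Finite := by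
      have := Metric.tendsto_nhds.mp hf 1 one_pos
      rw [Filter.eventually_cofinite] at this
      simpa [dist_zero_right] using this
    obtain ⟨C₀, hC₀⟩ := (h1.image (fun x => ‖f x‖)).bddAbove
    refine ⟨max C₀ 1, le_max_of_le_right zero_le_one, fun x => ?_⟩
    by_cases hx : ‖f x‖ < 1
    · exact le_max_of_le_right hx.le
    · exact le_max_of_le_left (hC₀ (Set.mem_image_of_mem _ hx))
  rw [Metric.tendsto_atTop]
  intro ε hε
  -- finite set outside which f is small
  have hsf : {x : G | ¬ ‖f x‖ < ε / 2}.Finite := by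
    have := Metric.tendsto_nhds.mp hf (ε / 2) (by linarith)
    rw [Filter.eventually_cofinite] at this
    simpa [dist_zero_right] using this
  set s : Finset G := hsf.toFinset with hsdef
  have hs : ∀ x ∉ s, ‖f x‖ ≤ ε / 2 := by
    intro x hx
    rw [hsdef, Set.Finite.mem_toFinset] at hx
    simp only [Set.mem_setOf_eq, not_not] at hx
    exact hx.le
  set D : ℝ := C * s.card + 1 with hDdef
  have hD : 0 < D := by positivity
  obtain ⟨N, hN⟩ : ∃ N, ∀ n ≥ N, Q n < ε / (2 * D) := by
    have := hQtend.eventually (gt_mem_nhds (show (0:ℝ) < ε / (2 * D) by positivity))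
    exact eventually_atTop.1 this
  refine ⟨N, fun n hn => ?_⟩
  have hb : ∀ g : G, ‖actConv f (P n) g‖ ≤ ε / 2 + C * s.card * Q n :=
    actConv_bound (hP n) hC0 hC s hs (by linarith) (fun h => hQle n h)
  have hsup : (⨆ g : G, ‖actConv f (P n) g‖) ≤ ε / 2 + C * s.card * Q n := ciSup_le hb
  have hsup0 : 0 ≤ ⨆ g : G, ‖actConv f (P n) g‖ :=
    Real.iSup_nonneg (fun g => norm_nonneg _)
  rw [Real.dist_eq, sub_zero, abs_of_nonneg hsup0]
  have hQn := hN n hn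
  have hQn' : C * s.card * Q n ≤ D * Q n :=
    mul_le_mul_of_nonneg_right (by rw [hDdef]; linarith) (hQ0 n)
  have : D * Q n < D * (ε / (2 * D)) := by
    exact mul_lt_mul_of_pos_left hQn hD
  have hDε : D * (ε / (2 * D)) = ε / 2 := by field_simp
  calc (⨆ g : G, ‖actConv f (P n) g‖) ≤ ε / 2 + C * s.card * Q n := hsup
    _ < ε := by nlinarith
end

section
/- Let G be an infinite discrete group and let μ be an irreducible probability measure on G. Then for every finite subset K ⊆ G, the concentration functions f_n(K) = sup_{x∈G} μ^{⋆n}(Kx⁻¹) converge to 0 as n → ∞. -/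
open Filter Topology
open scoped Classical

variable {G : Type*}

open scoped ENNReal

namespace ConcAux
variable [Group G]

noncomputable def econv (ν μ : G → ℝ≥0∞) : G → ℝ≥0∞ := fun g => ∑' a, ν a * μ (a⁻¹ * g)

noncomputable def epow (μ : G → ℝ≥0∞) : ℕ → G → ℝ≥0∞
  | 0 => fun g => if g = 1 then 1 else 0
  | n + 1 => econv (epow μ n) μ

lemma tsum_translate (μ : G → ℝ≥0∞) (a : G) : ∑' g, μ (a⁻¹ * g) = ∑' g, μ g :=
  Equiv.tsum_eq (Equiv.mulLeft a⁻¹) μ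

lemma tsum_econv {ν μ : G → ℝ≥0∞} (hν : ∑' g, ν g = 1) (hμ : ∑' g, μ g = 1) :
    ∑' g, econv ν μ g = 1 := by
  unfold econv
  rw [ENNReal.tsum_comm]
  calc ∑' (a : G) (g : G), ν a * μ (a⁻¹ * g)
      = ∑' a : G, ν a * ∑' g, μ (a⁻¹ * g) := by
        congr 1; funext a; rw [ENNReal.tsum_mul_left]
    _ = ∑' a : G, ν a * 1 := by
        congr 1; funext a; rw [tsum_translate, hμ]
    _ = 1 := by simp [hν]

lemma econv_delta (ν : G → ℝ≥0∞) : econv ν (fun g => if g = 1 then 1 else 0) = ν := by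
  funext g
  unfold econv
  rw [tsum_eq_single g]
  · simp
  · intro a ha
    have : ¬ (a⁻¹ * g = 1) := fun h => ha (by
      have := inv_mul_eq_one.mp h; exact this.symm ▸ rfl)
    simp only [this, if_false, mul_zero]

lemma econv_assoc (ν μ ρ : G → ℝ≥0∞) :
    econv (econv ν μ) ρ = econv ν (econv μ ρ) := by
  funext g
  unfold econv
  calc ∑' b, (∑' a, ν a * μ (a⁻¹ * b)) * ρ (b⁻¹ * g)
      = ∑' (b : G) (a : G), ν a * μ (a⁻¹ * b) * ρ (b⁻¹ * g) := by
        congr 1; funext b; rw [ENNReal.tsum_mul_right]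
    _ = ∑' (a : G) (b : G), ν a * μ (a⁻¹ * b) * ρ (b⁻¹ * g) := ENNReal.tsum_comm
    _ = ∑' a, ν a * ∑' b, μ (a⁻¹ * b) * ρ (b⁻¹ * g) := by
        congr 1; funext a; rw [← ENNReal.tsum_mul_left]
        congr 1; funext b; ring
    _ = ∑' a, ν a * ∑' c, μ c * ρ (c⁻¹ * (a⁻¹ * g)) := by
        congr 1; funext a; congr 1
        rw [← Equiv.tsum_eq (Equiv.mulLeft a) (fun b => μ (a⁻¹ * b) * ρ (b⁻¹ * g))]
        congr 1; funext c
        simp [Equiv.coe_mulLeft, mul_assoc, inv_mul_cancel_left, mul_inv_rev]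

lemma epow_tsum {μ : G → ℝ≥0∞} (hμ : ∑' g, μ g = 1) : ∀ n, ∑' g, epow μ n g = 1
  | 0 => by
      rw [tsum_eq_single (1 : G)]
      · simp [epow]
      · intro a ha; simp [epow, ha]
  | n + 1 => tsum_econv (epow_tsum hμ n) hμ

lemma epow_add {μ : G → ℝ≥0∞} : ∀ (m n : ℕ), epow μ (m + n) = econv (epow μ m) (epow μ n)
  | m, 0 => by
      simpa [epow] using (econv_delta (epow μ m)).symm
  | m, n + 1 => by
      have h : m + (n + 1) = (m + n) + 1 := by omega
      rw [h]
      show econv (epow μ (m + n)) μ = _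
      rw [epow_add m n, econv_assoc]
      rfl

lemma epow_le_one {μ : G → ℝ≥0∞} (hμ : ∑' g, μ g = 1) (n : ℕ) (g : G) :
    epow μ n g ≤ 1 := by
  rw [← epow_tsum hμ n]
  exact ENNReal.le_tsum g

lemma epow_ne_top {μ : G → ℝ≥0∞} (hμ : ∑' g, μ g = 1) (n : ℕ) (g : G) :
    epow μ n g ≠ ⊤ :=
  ne_top_of_le_ne_top ENNReal.one_ne_top (epow_le_one hμ n g)

lemma epow_one (μ : G → ℝ≥0∞) : epow μ 1 = μ := by
  funext g
  show econv (epow μ 0) μ g = μ g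
  unfold econv
  rw [tsum_eq_single (1 : G)]
  · simp [epow]
  · intro a ha; simp [epow, ha]

lemma epow_add_apply (μ : G → ℝ≥0∞) (m n : ℕ) (g : G) :
    epow μ (m + n) g = ∑' a, epow μ m a * epow μ n (a⁻¹ * g) := by
  rw [epow_add m n]; rfl

lemma epow_mul_pos {μ : G → ℝ≥0∞} {m n : ℕ} {u v : G}
    (hu : 0 < epow μ m u) (hv : 0 < epow μ n v) : 0 < epow μ (m + n) (u * v) := by
  rw [epow_add_apply]
  calc (0 : ℝ≥0∞) < epow μ m u * epow μ n (u⁻¹ * (u * v)) := by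
        rw [inv_mul_cancel_left]; exact ENNReal.mul_pos hu.ne' hv.ne'
    _ ≤ ∑' a, epow μ m a * epow μ n (a⁻¹ * (u * v)) := ENNReal.le_tsum u

lemma epow_pow_pos {μ : G → ℝ≥0∞} {r : ℕ} {v : G} (hv : 0 < epow μ r v) :
    ∀ j : ℕ, 0 < epow μ (r * j) (v ^ j)
  | 0 => by simp [epow]
  | j + 1 => by
      have h : r * (j + 1) = r * j + r := by ring
      rw [h, pow_succ]
      exact epow_mul_pos (epow_pow_pos hv j) hv

/-- the supremum (concentration value at singletons) -/
noncomputable def esup (μ : G → ℝ≥0∞) (n : ℕ) : ℝ≥0∞ := ⨆ g, epow μ n g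

lemma esup_le_one {μ : G → ℝ≥0∞} (hμ : ∑' g, μ g = 1) (n : ℕ) : esup μ n ≤ 1 :=
  iSup_le (epow_le_one hμ n)

lemma esup_add_le {μ : G → ℝ≥0∞} (hμ : ∑' g, μ g = 1) (m n : ℕ) :
    esup μ (m + n) ≤ esup μ n := by
  refine iSup_le fun g => ?_
  rw [epow_add_apply]
  calc (∑' a, epow μ m a * epow μ n (a⁻¹ * g))
      ≤ ∑' a, epow μ m a * esup μ n := by
        refine ENNReal.tsum_le_tsum fun a => ?_
        exact mul_le_mul_right (le_iSup _ _) _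
    _ = (∑' a, epow μ m a) * esup μ n := ENNReal.tsum_mul_right
    _ = esup μ n := by rw [epow_tsum hμ m, one_mul]

lemma esup_antitone {μ : G → ℝ≥0∞} (hμ : ∑' g, μ g = 1) : Antitone (esup μ) := by
  intro n n' h
  obtain ⟨m, rfl⟩ := Nat.exists_eq_add_of_le h
  exact le_trans (by rw [Nat.add_comm]; exact esup_add_le hμ m n) le_rfl

section Claim
variable {μ : G → ℝ≥0∞}

/-- The support of `epow μ m`. -/
def eSupp (μ : G → ℝ≥0∞) (m : ℕ) : Set G := {g | 0 < epow μ m g}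

lemma eSupp_nonempty (hμ : ∑' g, μ g = 1) (m : ℕ) : (eSupp μ m).Nonempty := by
  by_contra h
  rw [Set.not_nonempty_iff_eq_empty] at h
  have : ∑' g, epow μ m g = 0 := by
    rw [ENNReal.tsum_eq_zero]
    intro g
    by_contra hg
    have : g ∈ eSupp μ m := Set.mem_setOf.mpr (pos_iff_ne_zero.mpr hg)
    rw [h] at this
    exact Set.notMem_empty g this
  rw [epow_tsum hμ m] at this
  exact one_ne_zero this

lemma eSupp_mul {a b : ℕ} {u v : G} (hu : u ∈ eSupp μ a) (hv : v ∈ eSupp μ b) :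
    u * v ∈ eSupp μ (a + b) := epow_mul_pos hu hv

lemma eSupp_pow {r : ℕ} {v : G} (hv : v ∈ eSupp μ r) (j : ℕ) : v ^ j ∈ eSupp μ (r * j) :=
  epow_pow_pos hv j

/-- Key combinatorial claim: for an irreducible walk on an infinite group, the supports
of the convolution powers have unbounded cardinality. -/
lemma exists_large_support [Infinite G] (hμ : ∑' g, μ g = 1)
    (hirr : ∀ g : G, ∃ n : ℕ, 1 ≤ n ∧ g ∈ eSupp μ n) (N : ℕ) :
    ∃ M : ℕ, ∃ T : Finset G, T.card = N ∧ ↑T ⊆ eSupp μ M := by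
  by_contra hcon
  push_neg at hcon
  -- every support is finite with fewer than N elements
  have hfin : ∀ m, (eSupp μ m).Finite := by
    intro m
    by_contra h
    obtain ⟨T, hT, hcard⟩ := (Set.Infinite.exists_subset_card_eq h N)
    exact hcon m T hcard hT
  have hlt : ∀ m, (eSupp μ m).ncard < N := by
    intro m
    by_contra h
    push_neg at h
    obtain ⟨T, hTsub, hTcard⟩ := Finset.exists_subset_card_eq
      (by rwa [Set.ncard_eq_toFinset_card _ (hfin m)] at h : N ≤ (hfin m).toFinset.card)
    refine hcon m T hTcard ?_
    intro g hg
    exact (hfin m).mem_toFinset.mp (hTsub hg)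
  -- a level with maximal support cardinality
  obtain ⟨m₀, hm₀max⟩ : ∃ m₀ : ℕ, ∀ m, (eSupp μ m).ncard ≤ (eSupp μ m₀).ncard := by
    have hne : (Set.range fun m => (eSupp μ m).ncard).Nonempty := ⟨_, ⟨0, rfl⟩⟩
    have hbdd : BddAbove (Set.range fun m => (eSupp μ m).ncard) := by
      refine ⟨N, fun k hk => ?_⟩
      obtain ⟨m, rfl⟩ := hk
      exact (hlt m).le
    obtain ⟨m₀, hm₀⟩ := Nat.sSup_mem hne hbdd
    refine ⟨m₀, fun m => ?_⟩
    calc (eSupp μ m).ncard ≤ sSup (Set.range fun m => (eSupp μ m).ncard) := le_csSup hbdd ⟨m, rfl⟩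
      _ = (eSupp μ m₀).ncard := hm₀.symm
  -- maximality forces the supports to be right translates of `eSupp μ m₀`
  have htrans : ∀ (b : ℕ) (v : G), v ∈ eSupp μ b →
      eSupp μ (m₀ + b) = (fun u => u * v) '' eSupp μ m₀ := by
    intro b v hv
    refine (Set.eq_of_subset_of_ncard_le ?_ ?_ (hfin _)).symm
    · rintro _ ⟨u, hu, rfl⟩
      exact eSupp_mul hu hv
    · rw [Set.ncard_image_of_injective _ (mul_left_injective v)]
      exact hm₀max _
  obtain ⟨x, hx⟩ := eSupp_nonempty hμ 1
  have hxpow : ∀ b : ℕ, x ^ b ∈ eSupp μ b := fun b => by simpa using eSupp_pow hx b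
  by_cases hord : IsOfFinOrder x
  · -- finite order: the whole group is covered by finitely many cosets, contradiction
    have hsub : (Set.univ : Set G) ⊆
        Set.image2 (fun u z => u * z) (eSupp μ m₀) ((Subgroup.zpowers x : Subgroup G) : Set G) := by
      intro g _
      obtain ⟨m, _, hgm⟩ := hirr g
      have h1 : g * x ^ m₀ ∈ eSupp μ (m₀ + m) := by
        rw [show m₀ + m = m + m₀ by ring]
        exact eSupp_mul hgm (hxpow m₀)
      rw [htrans m (x ^ m) (hxpow m)] at h1
      obtain ⟨u, hu, heq⟩ := h1
      refine ⟨u, hu, x ^ ((m : ℤ) - (m₀ : ℤ)), ⟨(m : ℤ) - (m₀ : ℤ), rfl⟩, ?_⟩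
      have hg : g = u * (x ^ m * (x ^ m₀)⁻¹) := by
        simp only at heq
        rw [← mul_assoc, heq, mul_inv_cancel_right]
      rw [hg, zpow_sub, zpow_natCast, zpow_natCast]
    have hfin2 : (Set.image2 (fun u z => u * z) (eSupp μ m₀)
        ((Subgroup.zpowers x : Subgroup G) : Set G)).Finite :=
      Set.Finite.image2 _ (hfin m₀) hord.finite_zpowers
    exact (Set.infinite_univ.mono hsub) hfin2
  · -- infinite order: infinitely many distinct elements in `eSupp μ m₀`, contradiction
    have hinj : Function.Injective (fun j : ℕ => x ^ j) :=
      injective_pow_iff_not_isOfFinOrder.mpr hord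
    obtain ⟨r, _, hxr⟩ := hirr x⁻¹
    obtain ⟨u₀, hu₀⟩ := eSupp_nonempty hμ m₀
    have key : ∀ j : ℕ, u₀ * x ^ ((r + 1) * j) ∈ eSupp μ m₀ := by
      intro j
      have h1 : u₀ * x ^ (r * j) ∈ eSupp μ (m₀ + r * j) := eSupp_mul hu₀ (hxpow (r * j))
      have h2 : (x⁻¹) ^ j ∈ eSupp μ (r * j) := eSupp_pow hxr j
      rw [htrans (r * j) _ h2] at h1
      obtain ⟨u, hu, heq⟩ := h1
      have h3 : u = u₀ * x ^ ((r + 1) * j) := by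
        simp only at heq
        have h4 : u = u₀ * x ^ (r * j) * x ^ j := by
          rw [← heq, inv_pow, mul_assoc, inv_mul_cancel, mul_one]
        rw [h4, mul_assoc, ← pow_add]
        congr 2
        ring
      rwa [h3] at hu
    refine (Set.infinite_of_injective_forall_mem
        (f := fun j : ℕ => u₀ * x ^ ((r + 1) * j)) ?_ key) (hfin m₀)
    intro j j' h
    have h5 : (r + 1) * j = (r + 1) * j' := hinj (mul_left_cancel h)
    exact Nat.eq_of_mul_eq_mul_left (by omega) h5

end Claim

lemma esup_tendsto_zero [Infinite G] {μ : G → ℝ≥0∞} (hμ : ∑' g, μ g = 1)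
    (hirr : ∀ g : G, ∃ n : ℕ, 1 ≤ n ∧ g ∈ eSupp μ n) :
    Tendsto (esup μ) atTop (𝓝 0) := by
  have hanti := esup_antitone hμ
  have htend : Tendsto (esup μ) atTop (𝓝 (⨅ n, esup μ n)) := tendsto_atTop_iInf hanti
  set c := ⨅ n, esup μ n with hc
  rcases eq_or_ne c 0 with h0 | h0
  · rwa [h0] at htend
  exfalso
  have hcle : c ≤ 1 := le_trans (iInf_le _ 0) (esup_le_one hμ 0)
  have hctop : c ≠ ⊤ := ne_top_of_le_ne_top ENNReal.one_ne_top hcle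
  set creal := c.toReal with hcr
  have hcreal_pos : 0 < creal := ENNReal.toReal_pos h0 hctop
  set N := max 1 ⌈2 / creal⌉₊ with hN
  obtain ⟨M, T, hTcard, hTsub⟩ := exists_large_support hμ hirr N
  have hTne : T.Nonempty := Finset.card_pos.mp (by
    rw [hTcard]
    exact Nat.lt_of_lt_of_le Nat.zero_lt_one (by rw [hN]; exact le_max_left _ _))
  set δ := T.inf' hTne (fun h => (epow μ M h).toReal) with hδ
  have hδpos : 0 < δ := by
    rw [hδ, Finset.lt_inf'_iff]
    intro h hh
    exact ENNReal.toReal_pos (hTsub hh).ne' (epow_ne_top hμ M h)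
  have hδle : ∀ h ∈ T, δ ≤ (epow μ M h).toReal := fun h hh => Finset.inf'_le _ hh
  set ε := min (creal / 2) (creal * δ / 8) with hε
  have hεpos : 0 < ε := lt_min (by positivity) (by positivity)
  have hε1 : ε ≤ creal / 2 := min_le_left _ _
  have hε2 : ε ≤ creal * δ / 8 := min_le_right _ _
  -- choose n with esup n < creal + ε
  have htoReal : Tendsto (fun n => (esup μ n).toReal) atTop (𝓝 creal) :=
    (ENNReal.tendsto_toReal hctop).comp htend
  obtain ⟨n, hn⟩ := (htoReal.eventually_lt_const (by linarith : creal < creal + ε)).exists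
  set s := (esup μ n).toReal with hs
  have hstop : esup μ n ≠ ⊤ := ne_top_of_le_ne_top ENNReal.one_ne_top (esup_le_one hμ n)
  have hs0 : 0 ≤ s := ENNReal.toReal_nonneg
  -- choose a near-maximum point x for epow (M + n)
  have hlt : ENNReal.ofReal (creal - ε) < esup μ (M + n) := by
    have h1 : ENNReal.ofReal (creal - ε) < c := by
      conv_rhs => rw [← ENNReal.ofReal_toReal hctop]
      exact (ENNReal.ofReal_lt_ofReal_iff hcreal_pos).mpr (by linarith)
    calc ENNReal.ofReal (creal - ε) < c := h1
      _ = ⨅ k, esup μ k := hc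
      _ ≤ esup μ (M + n) := iInf_le _ _
  have hlt' : ENNReal.ofReal (creal - ε) < ⨆ g, epow μ (M + n) g := hlt
  obtain ⟨x, hxlt⟩ := lt_iSup_iff.mp hlt'
  -- key per-element bound
  have hkey : ∀ h ∈ T, 3 / 4 * creal < (epow μ n (h⁻¹ * x)).toReal := by
    intro h hh
    set dE := epow μ M h with hdE
    set ρE := ∑' a, if a = h then 0 else epow μ M a with hρE
    have hmass : dE + ρE = 1 := by
      rw [hdE, hρE, ← ENNReal.tsum_eq_add_tsum_ite h, epow_tsum hμ M]
    have hdtop : dE ≠ ⊤ := epow_ne_top hμ M h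
    have hρtop : ρE ≠ ⊤ := by
      intro habs
      rw [habs] at hmass
      simp at hmass
    have hsplit : epow μ (M + n) x ≤ dE * epow μ n (h⁻¹ * x) + ρE * esup μ n := by
      rw [epow_add_apply, ENNReal.tsum_eq_add_tsum_ite h]
      refine add_le_add le_rfl ?_
      rw [hρE, ← ENNReal.tsum_mul_right]
      refine ENNReal.tsum_le_tsum fun a => ?_
      by_cases ha : a = h
      · simp [ha]
      · simp only [ha, if_false]
        exact mul_le_mul_right (le_iSup _ _) _
    set d := dE.toReal with hd
    set rr := ρE.toReal with hrr
    set q := (epow μ n (h⁻¹ * x)).toReal with hq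
    have hdr : d + rr = 1 := by
      rw [hd, hrr, ← ENNReal.toReal_add hdtop hρtop, hmass, ENNReal.toReal_one]
    have hd0 : 0 ≤ d := ENNReal.toReal_nonneg
    have hrr0 : 0 ≤ rr := ENNReal.toReal_nonneg
    have hδd : δ ≤ d := hδle h hh
    have hq0 : 0 ≤ q := ENNReal.toReal_nonneg
    have hqs : q ≤ s := ENNReal.toReal_mono hstop (le_iSup _ _)
    have hrhs_top : dE * epow μ n (h⁻¹ * x) + ρE * esup μ n ≠ ⊤ :=
      ENNReal.add_ne_top.mpr ⟨ENNReal.mul_ne_top hdtop (epow_ne_top hμ n _),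
        ENNReal.mul_ne_top hρtop hstop⟩
    have hmain : creal - ε < d * q + rr * s := by
      have h3 : ENNReal.ofReal (creal - ε) < dE * epow μ n (h⁻¹ * x) + ρE * esup μ n :=
        hxlt.trans_le hsplit
      have h4 := (ENNReal.toReal_lt_toReal ENNReal.ofReal_ne_top hrhs_top).mpr h3
      rwa [ENNReal.toReal_ofReal (by linarith), ENNReal.toReal_add
        (ENNReal.mul_ne_top hdtop (epow_ne_top hμ n _)) (ENNReal.mul_ne_top hρtop hstop),
        ENNReal.toReal_mul, ENNReal.toReal_mul] at h4
    -- real algebra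
    have h5 : rr * s ≤ rr * (creal + ε) := mul_le_mul_of_nonneg_left hn.le hrr0
    have h6 : d * q > d * creal + d * ε - 2 * ε := by nlinarith
    have h7 : 2 * ε ≤ creal * d / 4 := by nlinarith
    nlinarith
  -- final contradiction
  have hsum_le : ∑ h ∈ T, (epow μ n (h⁻¹ * x)).toReal ≤ 1 := by
    have hE : ∑ h ∈ T, epow μ n (h⁻¹ * x) ≤ 1 := by
      rw [← epow_tsum hμ n]
      calc ∑ h ∈ T, epow μ n (h⁻¹ * x)
          = ∑ g ∈ T.image (fun h => h⁻¹ * x), epow μ n g := by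
            rw [Finset.sum_image]
            intro a _ b _ hab
            have := mul_right_cancel hab
            exact inv_injective this
        _ ≤ ∑' g, epow μ n g := ENNReal.sum_le_tsum _
    calc ∑ h ∈ T, (epow μ n (h⁻¹ * x)).toReal
        = (∑ h ∈ T, epow μ n (h⁻¹ * x)).toReal :=
          (ENNReal.toReal_sum fun a _ => epow_ne_top hμ n _).symm
      _ ≤ (1 : ℝ≥0∞).toReal := ENNReal.toReal_mono ENNReal.one_ne_top hE
      _ = 1 := ENNReal.toReal_one
  have hsum_gt : (N : ℝ) * (3 / 4 * creal) < ∑ h ∈ T, (epow μ n (h⁻¹ * x)).toReal := by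
    calc (N : ℝ) * (3 / 4 * creal) = ∑ _h ∈ T, 3 / 4 * creal := by
          rw [Finset.sum_const, hTcard, nsmul_eq_mul]
      _ < ∑ h ∈ T, (epow μ n (h⁻¹ * x)).toReal := Finset.sum_lt_sum_of_nonempty hTne hkey
  have hNc : 2 ≤ (N : ℝ) * creal := by
    have h1 : (2 / creal : ℝ) ≤ (⌈2 / creal⌉₊ : ℝ) := Nat.le_ceil _
    have h2 : (⌈2 / creal⌉₊ : ℝ) ≤ (N : ℝ) := by
      exact_mod_cast le_max_right 1 ⌈2 / creal⌉₊
    have h3 : (2 / creal : ℝ) ≤ (N : ℝ) := le_trans h1 h2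
    calc (2 : ℝ) = (2 / creal) * creal := by field_simp
      _ ≤ (N : ℝ) * creal := mul_le_mul_of_nonneg_right h3 hcreal_pos.le
  have : (N : ℝ) * (3 / 4 * creal) = 3 / 4 * ((N : ℝ) * creal) := by ring
  linarith

end ConcAux

section Bridge
variable [Group G] {μ : G → ℝ}

open ConcAux

/-- the ENNReal version of μ -/
noncomputable def emeas (μ : G → ℝ) : G → ℝ≥0∞ := fun g => ENNReal.ofReal (μ g)

lemma emeas_tsum (hμ : IsProbMeas μ) : ∑' g, emeas μ g = 1 := by
  have h1 : (∑' g, μ g) = 1 := hμ.2.tsum_eq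
  have := ENNReal.ofReal_tsum_of_nonneg hμ.1 hμ.2.summable
  rw [h1] at this
  simpa [emeas] using this.symm

lemma convPow_eq_toReal (hμ : IsProbMeas μ) : ∀ (n : ℕ) (g : G), convPow μ n g = (epow (emeas μ) n g).toReal
  | 0, g => by
      by_cases h : g = 1 <;> simp [convPow, epow, h]
  | n + 1, g => by
      have het := emeas_tsum hμ
      show mconv (convPow μ n) μ g = _
      unfold mconv
      have hpt : ∀ a : G, convPow μ n a * μ (a⁻¹ * g)
          = (epow (emeas μ) n a * emeas μ (a⁻¹ * g)).toReal := by
        intro a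
        rw [convPow_eq_toReal hμ n a, ENNReal.toReal_mul]
        congr 1
        simp [emeas, ENNReal.toReal_ofReal (hμ.1 _)]
      calc (∑' a, convPow μ n a * μ (a⁻¹ * g))
          = ∑' a, (epow (emeas μ) n a * emeas μ (a⁻¹ * g)).toReal := by
            congr 1; funext a; exact hpt a
        _ = (∑' a, epow (emeas μ) n a * emeas μ (a⁻¹ * g)).toReal := by
            rw [ENNReal.tsum_toReal_eq]
            intro a
            exact ENNReal.mul_ne_top (epow_ne_top het n a) ENNReal.ofReal_ne_top
        _ = (epow (emeas μ) (n + 1) g).toReal := rfl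

lemma convPow_nonneg (hμ : IsProbMeas μ) (n : ℕ) (g : G) : 0 ≤ convPow μ n g := by
  rw [convPow_eq_toReal hμ]; exact ENNReal.toReal_nonneg

lemma epow_emeas_eq (hμ : IsProbMeas μ) (n : ℕ) (g : G) :
    epow (emeas μ) n g = ENNReal.ofReal (convPow μ n g) := by
  rw [convPow_eq_toReal hμ, ENNReal.ofReal_toReal (epow_ne_top (emeas_tsum hμ) n g)]

end Bridge

/-- For an infinite discrete group `G` and an irreducible probability
measure `μ`, the concentration functions `f_n(K) = sup_x μ^{⋆n}(K x⁻¹)` converge to `0`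
for every finite `K ⊆ G`. -/
theorem concentration_functions [Group G] [Infinite G] (μ : G → ℝ)
    (hμ : IsProbMeas μ) (hirr : MeasIrreducible μ) (K : Finset G) :
    Tendsto (fun n : ℕ => ⨆ x : G, ∑ k ∈ K, convPow μ n (k * x⁻¹)) atTop (𝓝 0) := by
  classical
  open ConcAux in
  have het : ∑' g, emeas μ g = 1 := emeas_tsum hμ
  have hirr' : ∀ g : G, ∃ n : ℕ, 1 ≤ n ∧ g ∈ ConcAux.eSupp (emeas μ) n := by
    intro g
    obtain ⟨n, hn1, hn2⟩ := hirr g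
    refine ⟨n, hn1, ?_⟩
    show 0 < ConcAux.epow (emeas μ) n g
    rw [epow_emeas_eq hμ n g]
    exact ENNReal.ofReal_pos.mpr hn2
  have htz : Tendsto (ConcAux.esup (emeas μ)) atTop (𝓝 0) :=
    ConcAux.esup_tendsto_zero het hirr'
  have ha : Tendsto (fun n => (ConcAux.esup (emeas μ) n).toReal) atTop (𝓝 0) := by
    simpa [Function.comp_def] using (ENNReal.tendsto_toReal (by simp : (0 : ℝ≥0∞) ≠ ⊤)).comp htz
  have hstop : ∀ n, ConcAux.esup (emeas μ) n ≠ ⊤ := fun n =>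
    ne_top_of_le_ne_top ENNReal.one_ne_top (ConcAux.esup_le_one het n)
  have hsum_le : ∀ (n : ℕ) (x : G),
      ∑ k ∈ K, convPow μ n (k * x⁻¹) ≤ (K.card : ℝ) * (ConcAux.esup (emeas μ) n).toReal := by
    intro n x
    have h1 : ∀ k ∈ K, convPow μ n (k * x⁻¹) ≤ (ConcAux.esup (emeas μ) n).toReal := by
      intro k _
      rw [convPow_eq_toReal hμ]
      exact ENNReal.toReal_mono (hstop n) (le_iSup _ _)
    calc ∑ k ∈ K, convPow μ n (k * x⁻¹)
        ≤ ∑ _k ∈ K, (ConcAux.esup (emeas μ) n).toReal := Finset.sum_le_sum h1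
      _ = (K.card : ℝ) * (ConcAux.esup (emeas μ) n).toReal := by
          rw [Finset.sum_const, nsmul_eq_mul]
  have hF_le : ∀ n : ℕ, (⨆ x : G, ∑ k ∈ K, convPow μ n (k * x⁻¹))
      ≤ (K.card : ℝ) * (ConcAux.esup (emeas μ) n).toReal := by
    intro n
    exact ciSup_le (hsum_le n)
  have hF_nonneg : ∀ n : ℕ, 0 ≤ ⨆ x : G, ∑ k ∈ K, convPow μ n (k * x⁻¹) := by
    intro n
    have hbdd : BddAbove (Set.range fun x : G => ∑ k ∈ K, convPow μ n (k * x⁻¹)) := by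
      refine ⟨(K.card : ℝ) * (ConcAux.esup (emeas μ) n).toReal, ?_⟩
      rintro _ ⟨x, rfl⟩
      exact hsum_le n x
    refine le_trans ?_ (le_ciSup hbdd (1 : G))
    exact Finset.sum_nonneg fun k _ => convPow_nonneg hμ n _
  have hbound : Tendsto (fun n => (K.card : ℝ) * (ConcAux.esup (emeas μ) n).toReal)
      atTop (𝓝 0) := by
    simpa using ha.const_mul (K.card : ℝ)
  exact squeeze_zero hF_nonneg hF_le hbound
end

section
/- Let G be a discrete group and μ a probability measure on G. Then the following are equivalent: (i) for every finite subset K ⊆ G, sup_{x∈G} μ^{⋆n}(Kx⁻¹) → 0 as n → ∞; (ii) for every f ∈ c₀(G), ‖f ⋆ μ^{⋆n}‖_∞ → 0 as n → ∞ (i.e., the convolution operators μ^{⋆n} on c₀(G) converge to zero in the strong operator topology). -/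
open Filter Topology
open scoped Classical

variable {G : Type*}

lemma hasSum_mconv_prod [Group G] {ν μ : G → ℝ} (hν : IsProbMeas ν) (hμ : IsProbMeas μ) :
    HasSum (fun p : G × G => ν p.2 * μ (p.2⁻¹ * p.1)) 1 := by
  have hsm : Summable fun p : G × G => ν p.1 * μ p.2 :=
    Summable.mul_of_nonneg ⟨1, hν.2⟩ ⟨1, hμ.2⟩ hν.1 hμ.1
  have h1 : HasSum (fun p : G × G => ν p.1 * μ p.2) 1 := by
    simpa using hν.2.mul hμ.2 hsm
  have h2 : HasSum (fun p : G × G => ν p.1 * μ (p.1⁻¹ * p.2)) 1 := by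
    have := (Equiv.hasSum_iff
        (Equiv.prodShear (Equiv.refl G) (fun a : G => Equiv.mulLeft a⁻¹))
        (f := fun p : G × G => ν p.1 * μ p.2)).2 h1
    simpa [Equiv.prodShear, Function.comp_def] using this
  exact (Equiv.hasSum_iff (Equiv.prodComm G G)
      (f := fun p : G × G => ν p.2 * μ (p.2⁻¹ * p.1))).1 (by simpa [Function.comp_def] using h2)

lemma isProbMeas_mconv [Group G] {ν μ : G → ℝ} (hν : IsProbMeas ν) (hμ : IsProbMeas μ) :
    IsProbMeas (mconv ν μ) := by
  have htot := hasSum_mconv_prod hν hμ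
  refine ⟨fun g => tsum_nonneg fun a => mul_nonneg (hν.1 a) (hμ.1 _), ?_⟩
  exact htot.prod_fiberwise fun g => (htot.summable.prod_factor g).hasSum

lemma isProbMeas_convPow [Group G] {μ : G → ℝ} (hμ : IsProbMeas μ) (n : ℕ) :
    IsProbMeas (convPow μ n) := by
  induction n with
  | zero =>
      refine ⟨fun g => ?_, ?_⟩
      · simp only [convPow]; split <;> norm_num
      · simpa [convPow] using hasSum_ite_eq (1 : G) (1 : ℝ)
  | succ n ih => exact isProbMeas_mconv ih hμ

lemma iSup_inv_eq [Group G] (f : G → ℝ) : (⨆ x : G, f x⁻¹) = ⨆ x : G, f x := by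
  rw [iSup, iSup]
  congr 1
  ext y
  constructor
  · rintro ⟨x, rfl⟩; exact ⟨x⁻¹, rfl⟩
  · rintro ⟨x, rfl⟩; exact ⟨x⁻¹, by simp⟩

/-- For a probability measure `μ` on a discrete group `G`, the
concentration functions `sup_x μ^{⋆n}(K x⁻¹)` tend to `0` for every finite `K`
iff the convolution operators `μ^{⋆n}` on `c₀(G)` tend to zero strongly. -/
theorem concentration_iff_strong_convergence [Group G] (μ : G → ℝ)
    (hμ : IsProbMeas μ) :
    (∀ K : Finset G,
        Tendsto (fun n : ℕ => ⨆ x : G, ∑ k ∈ K, convPow μ n (k * x⁻¹)) atTop (𝓝 0)) ↔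
      (∀ f : G → ℂ, ZeroAtInfty f →
        Tendsto (fun n : ℕ => ⨆ g : G, ‖actConv f (convPow μ n) g‖) atTop (𝓝 0)) := by
  have hP : ∀ n, IsProbMeas (convPow μ n) := isProbMeas_convPow hμ
  have hsum : ∀ n, Summable (convPow μ n) := fun n => ⟨1, (hP n).2⟩
  have hbdd : ∀ n, BddAbove (Set.range (convPow μ n)) := by
    intro n
    refine ⟨1, ?_⟩
    rintro _ ⟨g, rfl⟩
    exact le_hasSum (hP n).2 g fun j _ => (hP n).1 j
  set s : ℕ → ℝ := fun n => ⨆ g : G, convPow μ n g with hs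
  have hsle : ∀ n g, convPow μ n g ≤ s n := fun n g => le_ciSup (hbdd n) g
  have hsnn : ∀ n, 0 ≤ s n := fun n => Real.iSup_nonneg fun g => (hP n).1 g
  constructor
  · intro H f hf
    -- sup of convPow tends to 0
    have hs0 : Tendsto s atTop (𝓝 0) := by
      have h1 := H {1}
      have heq : (fun n : ℕ => ⨆ x : G, ∑ k ∈ ({1} : Finset G), convPow μ n (k * x⁻¹)) = s := by
        funext n
        simp only [Finset.sum_singleton, one_mul]
        exact iSup_inv_eq _
      rwa [heq] at h1
    -- f is bounded
    have hev1 : ∀ᶠ y in cofinite, ‖f y‖ < 1 := by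
      have := Metric.tendsto_nhds.mp hf 1 one_pos
      simpa [dist_eq_norm] using this
    obtain hfin : {y : G | ¬ ‖f y‖ < 1}.Finite := Filter.eventually_cofinite.mp hev1
    set M : ℝ := 1 + ∑ y ∈ hfin.toFinset, ‖f y‖ with hMdef
    have hM1 : 1 ≤ M := le_add_of_nonneg_right (Finset.sum_nonneg fun y _ => norm_nonneg _)
    have hM0 : 0 < M := lt_of_lt_of_le one_pos hM1
    have hM : ∀ y, ‖f y‖ ≤ M := by
      intro y
      by_cases hy : ‖f y‖ < 1
      · exact le_trans hy.le hM1
      · have hmem : y ∈ hfin.toFinset := by simpa using hy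
        calc ‖f y‖ ≤ ∑ z ∈ hfin.toFinset, ‖f z‖ :=
              Finset.single_le_sum (fun z _ => norm_nonneg _) hmem
          _ ≤ M := le_add_of_nonneg_left one_pos.le
    rw [Metric.tendsto_atTop]
    intro ε hε
    have hε2 : 0 < ε / 2 := by positivity
    have hevK : ∀ᶠ y in cofinite, ‖f y‖ < ε / 2 := by
      have := Metric.tendsto_nhds.mp hf (ε / 2) hε2
      simpa [dist_eq_norm] using this
    obtain hKfin : {y : G | ¬ ‖f y‖ < ε / 2}.Finite := Filter.eventually_cofinite.mp hevK
    set K : Finset G := hKfin.toFinset with hKdef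
    have hKout : ∀ y ∉ K, ‖f y‖ < ε / 2 := by
      intro y hy
      by_contra h
      exact hy (by simpa [hKdef] using h)
    obtain ⟨C, hCdef⟩ : ∃ C : ℝ, C = M * K.card := ⟨_, rfl⟩
    have hC0 : 0 ≤ C := hCdef ▸ mul_nonneg hM0.le (Nat.cast_nonneg _)
    obtain ⟨δ, hδdef⟩ : ∃ δ : ℝ, δ = ε / (2 * (C + 1)) := ⟨_, rfl⟩
    have hδ0 : 0 < δ := hδdef ▸ div_pos hε (by linarith)
    have hCδ : C * δ < ε / 2 := by
      have h1 : C * δ < (C + 1) * δ := mul_lt_mul_of_pos_right (lt_add_one C) hδ0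
      have h2 : (C + 1) * δ = ε / 2 := by
        rw [hδdef]; field_simp
      linarith
    -- choose N from hs0
    obtain ⟨N, hN⟩ := Metric.tendsto_atTop.mp hs0 δ hδ0
    refine ⟨N, fun n hn => ?_⟩
    have hsδ : s n < δ := by
      have := hN n hn
      rw [Real.dist_eq, sub_zero] at this
      exact lt_of_le_of_lt (le_abs_self _) this
    -- core pointwise bound
    have hcore : ∀ g : G, ‖actConv f (convPow μ n) g‖ ≤ ε / 2 + C * s n := by
      intro g
      set ν : G → ℝ := convPow μ n with hνdef
      have hνnn : ∀ h, 0 ≤ ν h := (hP n).1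
      have hνs : Summable ν := hsum n
      have hbound : ∀ h : G, ‖f (g * h) * ((ν h : ℝ) : ℂ)‖ = ‖f (g * h)‖ * ν h := by
        intro h
        rw [norm_mul, Complex.norm_real, Real.norm_eq_abs, abs_of_nonneg (hνnn h)]
      have hsum1 : Summable fun h : G => ‖f (g * h) * ((ν h : ℝ) : ℂ)‖ := by
        refine Summable.of_nonneg_of_le (fun h => norm_nonneg _) (fun h => ?_) (hνs.mul_left M)
        rw [hbound h]
        exact mul_le_mul_of_nonneg_right (hM _) (hνnn h)
      have h1 : ‖actConv f ν g‖ ≤ ∑' h : G, ‖f (g * h) * ((ν h : ℝ) : ℂ)‖ :=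
        norm_tsum_le_tsum_norm hsum1
      have h2 : (∑' h : G, ‖f (g * h) * ((ν h : ℝ) : ℂ)‖)
          = ∑' h : G, ‖f (g * h)‖ * ν h := tsum_congr hbound
      -- RHS splitting function
      set F : G → ℝ := fun h => ε / 2 * ν h + (if g * h ∈ K then M * ν h else 0) with hFdef
      have hsumIf : Summable fun h : G => (if g * h ∈ K then M * ν h else 0) := by
        refine Summable.of_nonneg_of_le (fun h => ?_) (fun h => ?_) (hνs.mul_left M)
        · split
          · exact mul_nonneg hM0.le (hνnn h)
          · exact le_refl _
        · split
          · exact le_refl _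
          · exact mul_nonneg hM0.le (hνnn h)
      have hsumF : Summable F := (hνs.mul_left (ε / 2)).add hsumIf
      have h3 : (∑' h : G, ‖f (g * h)‖ * ν h) ≤ ∑' h : G, F h := by
        refine Summable.tsum_le_tsum (fun h => ?_) ?_ hsumF
        · rw [hFdef]
          by_cases hin : g * h ∈ K
          · simp only [hin, if_true]
            have : ‖f (g * h)‖ * ν h ≤ M * ν h :=
              mul_le_mul_of_nonneg_right (hM _) (hνnn h)
            nlinarith [mul_nonneg hε2.le (hνnn h)]
          · simp only [hin, if_false, add_zero]
            exact mul_le_mul_of_nonneg_right (hKout _ hin).le (hνnn h)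
        · refine Summable.of_nonneg_of_le (fun h => mul_nonneg (norm_nonneg _) (hνnn h))
            (fun h => mul_le_mul_of_nonneg_right (hM _) (hνnn h)) (hνs.mul_left M)
      have h4 : (∑' h : G, F h)
          = ε / 2 + ∑' h : G, (if g * h ∈ K then M * ν h else 0) := by
        rw [hFdef, Summable.tsum_add (hνs.mul_left (ε / 2)) hsumIf, ((hP n).2.mul_left (ε / 2)).tsum_eq,
          mul_one]
      have h5 : (∑' h : G, (if g * h ∈ K then M * ν h else 0))
          = M * ∑ k ∈ K, ν (g⁻¹ * k) := by
        have hsupp : ∀ h ∉ K.image (fun k => g⁻¹ * k),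
            (if g * h ∈ K then M * ν h else 0) = 0 := by
          intro h hh
          rw [if_neg]
          intro hin
          exact hh (Finset.mem_image.mpr ⟨g * h, hin, by group⟩)
        rw [tsum_eq_sum hsupp]
        rw [Finset.sum_image (fun a _ b _ hab => by
          exact mul_left_cancel hab)]
        rw [Finset.mul_sum]
        refine Finset.sum_congr rfl fun k hk => ?_
        rw [if_pos (by simpa using hk)]
      have h6 : (∑ k ∈ K, ν (g⁻¹ * k)) ≤ (K.card : ℝ) * s n := by
        calc (∑ k ∈ K, ν (g⁻¹ * k)) ≤ ∑ _k ∈ K, s n :=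
              Finset.sum_le_sum fun k _ => hsle n _
          _ = (K.card : ℝ) * s n := by rw [Finset.sum_const, nsmul_eq_mul]
      calc ‖actConv f ν g‖ ≤ ∑' h : G, F h := by rw [← h2] at h3; exact le_trans h1 h3
        _ = ε / 2 + M * ∑ k ∈ K, ν (g⁻¹ * k) := by rw [h4, h5]
        _ ≤ ε / 2 + C * s n := by
            have h7 := mul_le_mul_of_nonneg_left h6 hM0.le
            have h8 : M * ((K.card : ℝ) * s n) = C * s n := by rw [hCdef]; ring
            exact add_le_add_right (h8 ▸ h7) (ε / 2)
    -- conclude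
    have hT : (⨆ g : G, ‖actConv f (convPow μ n) g‖) ≤ ε / 2 + C * s n :=
      Real.iSup_le hcore (add_nonneg hε2.le (mul_nonneg hC0 (hsnn n)))
    have hTnn : 0 ≤ ⨆ g : G, ‖actConv f (convPow μ n) g‖ :=
      Real.iSup_nonneg fun g => norm_nonneg _
    rw [Real.dist_eq, sub_zero, abs_of_nonneg hTnn]
    have : C * s n ≤ C * δ := mul_le_mul_of_nonneg_left hsδ.le hC0
    linarith
  · intro H K
    -- test function: indicator of {1}
    set f : G → ℂ := fun g => if g = 1 then 1 else 0 with hfdef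
    have hf : ZeroAtInfty f := by
      have hev : ∀ᶠ g in cofinite, f g = 0 := by
        rw [Filter.eventually_cofinite]
        refine Set.Finite.subset (Set.finite_singleton 1) ?_
        intro g hg
        simp only [hfdef, Set.mem_setOf_eq] at hg
        by_contra hne
        simp only [Set.mem_singleton_iff] at hne
        exact hg (if_neg hne)
      exact (tendsto_const_nhds : Tendsto (fun _ : G => (0 : ℂ)) cofinite (𝓝 0)).congr'
        (hev.mono fun g h => h.symm)
    have hact : ∀ n (g : G), actConv f (convPow μ n) g = ((convPow μ n g⁻¹ : ℝ) : ℂ) := by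
      intro n g
      rw [actConv]
      rw [tsum_eq_single g⁻¹]
      · simp [hfdef]
      · intro h hne
        have hne1 : g * h ≠ 1 := fun hc => hne (eq_inv_of_mul_eq_one_right hc)
        simp [hfdef, hne1]
    have hs0 : Tendsto s atTop (𝓝 0) := by
      have h := H f hf
      have heq : (fun n : ℕ => ⨆ g : G, ‖actConv f (convPow μ n) g‖) = s := by
        funext n
        have : (fun g : G => ‖actConv f (convPow μ n) g‖) = fun g => convPow μ n g⁻¹ := by
          funext g
          rw [hact n g, Complex.norm_real, Real.norm_eq_abs, abs_of_nonneg ((hP n).1 _)]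
        rw [this]
        exact iSup_inv_eq _
      rwa [heq] at h
    have low : ∀ n, 0 ≤ ⨆ x : G, ∑ k ∈ K, convPow μ n (k * x⁻¹) := fun n =>
      Real.iSup_nonneg fun x => Finset.sum_nonneg fun k _ => (hP n).1 _
    have up : ∀ n, (⨆ x : G, ∑ k ∈ K, convPow μ n (k * x⁻¹)) ≤ (K.card : ℝ) * s n := by
      intro n
      refine Real.iSup_le (fun x => ?_) (mul_nonneg (Nat.cast_nonneg _) (hsnn n))
      calc (∑ k ∈ K, convPow μ n (k * x⁻¹)) ≤ ∑ _k ∈ K, s n :=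
            Finset.sum_le_sum fun k _ => hsle n _
        _ = (K.card : ℝ) * s n := by rw [Finset.sum_const, nsmul_eq_mul]
    have hlim : Tendsto (fun n => (K.card : ℝ) * s n) atTop (𝓝 0) := by
      simpa using hs0.const_mul (K.card : ℝ)
    exact tendsto_of_tendsto_of_tendsto_of_le_of_le tendsto_const_nhds hlim low up
end

section
/- Let G be an infinite discrete group, let μ be an irreducible probability measure on G, let k ≥ 1, and let ρ : G → [0,∞) be a summable function (ρ ∈ ℓ¹(G), ρ ≥ 0) satisfying ρ ⋆ μ^{⋆k} = ρ. Then ρ = 0. -/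
open Filter Topology
open scoped Classical ENNReal

variable {G : Type*}

/-! ### Auxiliary ENNReal-valued convolution theory -/

/-- ENNReal convolution. -/
noncomputable def econv [Group G] (ν μ : G → ℝ≥0∞) : G → ℝ≥0∞ :=
  fun g => ∑' a : G, ν a * μ (a⁻¹ * g)

/-- ENNReal convolution power. -/
noncomputable def epow [Group G] (μ : G → ℝ≥0∞) : ℕ → G → ℝ≥0∞
  | 0 => fun g => if g = 1 then 1 else 0
  | n + 1 => econv (epow μ n) μ

lemma econv_epow_zero [Group G] (f μ : G → ℝ≥0∞) : econv f (epow μ 0) = f := by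
  funext g
  have : ∀ a : G, a ≠ g → f a * epow μ 0 (a⁻¹ * g) = 0 := by
    intro a ha
    simp [epow, inv_mul_eq_one, ha]
  rw [econv, tsum_eq_single g this]
  simp [epow]

lemma epow_zero_mass [Group G] (μ : G → ℝ≥0∞) : ∑' g, epow μ 0 g = 1 := by
  rw [tsum_eq_single (1 : G) (by intro b hb; simp [epow, hb])]
  simp [epow]

lemma econv_mass [Group G] (ν μ : G → ℝ≥0∞) :
    ∑' g, econv ν μ g = (∑' g, ν g) * (∑' g, μ g) := by
  unfold econv
  rw [ENNReal.tsum_comm]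
  have : ∀ a : G, ∑' g : G, ν a * μ (a⁻¹ * g) = ν a * ∑' g, μ g := by
    intro a
    rw [ENNReal.tsum_mul_left]
    congr 1
    exact (Equiv.mulLeft a⁻¹).tsum_eq μ
  simp_rw [this]
  rw [ENNReal.tsum_mul_right]

lemma epow_mass [Group G] (μ : G → ℝ≥0∞) (hμ : ∑' g, μ g = 1) (n : ℕ) :
    ∑' g, epow μ n g = 1 := by
  induction n with
  | zero => exact epow_zero_mass μ
  | succ n ih => rw [epow, econv_mass, ih, hμ, one_mul]

lemma econv_assoc [Group G] (f g h : G → ℝ≥0∞) :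
    econv (econv f g) h = econv f (econv g h) := by
  funext x
  unfold econv
  calc ∑' a : G, (∑' b : G, f b * g (b⁻¹ * a)) * h (a⁻¹ * x)
      = ∑' a : G, ∑' b : G, f b * (g (b⁻¹ * a) * h (a⁻¹ * x)) := by
        congr 1; funext a; rw [← ENNReal.tsum_mul_right]; congr 1; funext b; ring
    _ = ∑' b : G, ∑' a : G, f b * (g (b⁻¹ * a) * h (a⁻¹ * x)) := ENNReal.tsum_comm
    _ = ∑' b : G, f b * ∑' a : G, g (b⁻¹ * a) * h (a⁻¹ * x) := by
        congr 1; funext b; rw [ENNReal.tsum_mul_left]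
    _ = ∑' b : G, f b * ∑' c : G, g c * h (c⁻¹ * (b⁻¹ * x)) := by
        congr 1; funext b; congr 1
        rw [← (Equiv.mulLeft b).tsum_eq (fun a => g (b⁻¹ * a) * h (a⁻¹ * x))]
        congr 1; funext c
        simp [mul_assoc]

/-- The key ENNReal lemma. -/
lemma ennreal_stationary_vanishes [Group G] [Infinite G] (P : G → ℝ≥0∞)
    (hP : ∑' g, P g = 1) (hirr : ∀ g : G, ∃ n : ℕ, 1 ≤ n ∧ 0 < epow P n g)
    (k : ℕ) (hk : 1 ≤ k) (R : G → ℝ≥0∞) (hR : ∑' g, R g ≠ ⊤)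
    (h : econv R (epow P k) = R) : R = 0 := by
  set ρ : G → ℝ≥0∞ := fun g => ∑ j ∈ Finset.range k, econv R (epow P j) g with hρ
  -- econv of a finite sum
  have econv_sum : ∀ (s : Finset ℕ) (F : ℕ → G → ℝ≥0∞) (q : G → ℝ≥0∞),
      econv (fun g => ∑ j ∈ s, F j g) q = fun g => ∑ j ∈ s, econv (F j) q g := by
    intro s F q
    funext g
    unfold econv
    rw [← Summable.tsum_finsetSum (fun i _ => ENNReal.summable)]
    congr 1; funext a; rw [Finset.sum_mul]
  -- ρ is stationary for P
  have hstat1 : econv ρ P = ρ := by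
    rw [hρ, econv_sum]
    funext g
    have : ∀ j, econv (econv R (epow P j)) P = econv R (epow P (j + 1)) := by
      intro j; rw [econv_assoc]; rfl
    simp_rw [this]
    set F : ℕ → ℝ≥0∞ := fun j => econv R (epow P j) g with hF
    have hF0k : F k = F 0 := by
      simp only [hF]
      rw [h, econv_epow_zero]
    have hF0top : F 0 ≠ ⊤ := by
      have : F 0 = R g := by simp only [hF]; rw [econv_epow_zero]
      rw [this]
      exact ne_top_of_le_ne_top hR (ENNReal.le_tsum g)
    have e1 : ∑ i ∈ Finset.range k, F (i + 1) + F 0 = ∑ i ∈ Finset.range (k + 1), F i :=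
      (Finset.sum_range_succ' F k).symm
    have e2 : ∑ i ∈ Finset.range (k + 1), F i = ∑ i ∈ Finset.range k, F i + F 0 := by
      rw [Finset.sum_range_succ, hF0k]
    have := e1.trans e2
    exact (ENNReal.add_right_inj hF0top).mp (by simpa [add_comm] using this)
  -- ρ is stationary for every power of P
  have hstatn : ∀ n : ℕ, econv ρ (epow P n) = ρ := by
    intro n
    induction n with
    | zero => exact econv_epow_zero ρ P
    | succ n ih =>
      show econv ρ (econv (epow P n) P) = ρ
      rw [← econv_assoc, ih, hstat1]
  -- mass of ρ is finite
  have hρmass : ∑' g, ρ g ≠ ⊤ := by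
    rw [hρ]
    rw [Summable.tsum_finsetSum (fun i _ => ENNReal.summable)]
    have hle : ∀ j ∈ Finset.range k, (∑' g, econv R (epow P j) g) ≤ ∑' g, R g := by
      intro j _
      rw [econv_mass, epow_mass P hP, mul_one]
    refine (lt_of_le_of_lt (Finset.sum_le_sum hle) ?_).ne
    exact ENNReal.sum_lt_top.mpr fun _ _ => hR.lt_top
  -- it suffices to show ρ = 0
  have hRleρ : ∀ g, R g ≤ ρ g := by
    intro g
    have : econv R (epow P 0) g ≤ ρ g := by
      rw [hρ]
      exact Finset.single_le_sum (f := fun j => econv R (epow P j) g)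
        (fun _ _ => zero_le) (Finset.mem_range.mpr hk)
    rwa [econv_epow_zero] at this
  suffices hρ0 : ρ = 0 by
    funext g
    have := hRleρ g
    rw [hρ0] at this
    simpa using this
  by_contra hne
  -- the supremum of ρ
  obtain ⟨g₁, hg₁⟩ : ∃ g, ρ g ≠ 0 := by
    by_contra hc
    push_neg at hc
    exact hne (funext fun g => hc g)
  set s : ℝ≥0∞ := ⨆ g, ρ g with hs
  have hsle : ∀ g, ρ g ≤ s := fun g => le_iSup ρ g
  have hstop : s ≠ ⊤ := by
    refine ne_top_of_le_ne_top hρmass (iSup_le fun g => ENNReal.le_tsum g)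
  have hs0 : s ≠ 0 := fun hc => hg₁ (le_antisymm (hc ▸ hsle g₁) zero_le)
  -- the sup is attained
  obtain ⟨g₀, hg₀⟩ : ∃ g₀, ρ g₀ = s := by
    have hhalf : s / 2 < s := ENNReal.half_lt_self hs0 hstop
    have h2ne : s / 2 ≠ 0 := by
      simp [ENNReal.div_eq_zero_iff, hs0]
    have hA : {g : G | s / 2 ≤ ρ g}.Finite :=
      ENNReal.finite_const_le_of_tsum_ne_top hρmass h2ne
    obtain ⟨g₂, hg₂⟩ : ∃ g, s / 2 < ρ g := by
      simpa [hs] using (lt_iSup_iff.mp hhalf)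
    have hAne : {g : G | s / 2 ≤ ρ g}.Nonempty := ⟨g₂, hg₂.le⟩
    obtain ⟨g₀, hg₀A, hg₀max⟩ := Set.exists_max_image _ ρ hA hAne
    refine ⟨g₀, le_antisymm (hsle g₀) (iSup_le fun g => ?_)⟩
    by_cases hgA : g ∈ {g : G | s / 2 ≤ ρ g}
    · exact hg₀max g hgA
    · exact le_trans (le_of_not_ge hgA) (le_trans hg₂.le (hg₀max g₂ hg₂.le))
  -- every point has ρ = s
  have hall : ∀ a : G, ρ a = s := by
    intro a
    by_contra hlt'
    have hlt : ρ a < s := lt_of_le_of_ne (hsle a) hlt'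
    obtain ⟨n, hn1, hnpos⟩ := hirr (a⁻¹ * g₀)
    set Q : G → ℝ≥0∞ := epow P n with hQ
    have hw : 0 < Q (a⁻¹ * g₀) := hnpos
    set w : ℝ≥0∞ := Q (a⁻¹ * g₀) with hwdef
    -- translates of Q sum to 1
    have hQtrans : ∑' b : G, Q (b⁻¹ * g₀) = 1 := by
      have := ((Equiv.inv G).trans (Equiv.mulRight g₀)).tsum_eq Q
      simpa using this.trans (epow_mass P hP n)
    have hsplitQ : w + (∑' b : G, if b = a then 0 else Q (b⁻¹ * g₀)) = 1 := by
      rw [← hQtrans]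
      exact (ENNReal.tsum_eq_add_tsum_ite (f := fun b => Q (b⁻¹ * g₀)) a).symm
    set r : ℝ≥0∞ := ∑' b : G, if b = a then 0 else Q (b⁻¹ * g₀) with hr
    have hw1 : w ≤ 1 := by rw [← hsplitQ]; exact le_self_add
    have hwtop : w ≠ ⊤ := ne_top_of_le_ne_top (by simp) hw1
    have hρeq : s = ∑' b : G, ρ b * Q (b⁻¹ * g₀) := by
      conv_lhs => rw [← hg₀]
      conv_lhs => rw [← hstatn n]
      rfl
    have hsplit : (∑' b : G, ρ b * Q (b⁻¹ * g₀))
        = ρ a * w + ∑' b : G, if b = a then 0 else ρ b * Q (b⁻¹ * g₀) :=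
      ENNReal.tsum_eq_add_tsum_ite a
    have hrest : (∑' b : G, if b = a then 0 else ρ b * Q (b⁻¹ * g₀)) ≤ s * r := by
      rw [hr, ← ENNReal.tsum_mul_left]
      refine ENNReal.tsum_le_tsum fun b => ?_
      by_cases hb : b = a
      · simp [hb]
      · simp only [hb, if_false]
        exact mul_le_mul_left (hsle b) _
    have hfinal : s < s := by
      calc s = ρ a * w + ∑' b : G, if b = a then 0 else ρ b * Q (b⁻¹ * g₀) :=
            hρeq.trans hsplit
        _ ≤ ρ a * w + s * r := add_le_add_right hrest _
        _ < s * w + s * r := by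
            have hrle : r ≤ 1 := by rw [← hsplitQ]; exact le_add_self
            have hsrtop : s * r ≠ ⊤ :=
              ne_top_of_le_ne_top hstop ((mul_le_mul_right hrle s).trans (by simp))
            exact ENNReal.add_lt_add_right hsrtop
              (ENNReal.mul_lt_mul_left hw.ne' hwtop hlt)
        _ = s * (w + r) := (mul_add s w r).symm
        _ = s := by rw [hsplitQ, mul_one]
    exact absurd hfinal (lt_irrefl s)
  -- contradiction with finite mass on infinite group
  have : ∑' _ : G, s = ⊤ := ENNReal.tsum_const_eq_top_of_ne_zero hs0
  apply hρmass
  rw [← this]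
  congr 1
  funext g
  exact hall g

/-- On an infinite discrete group, a non-negative summable `ρ` which is
stationary for some power `μ^{⋆k}` (`k ≥ 1`) of an irreducible probability measure `μ`
must vanish. -/
theorem stationary_for_power_vanishes [Group G] [Infinite G] (μ : G → ℝ)
    (hμ : IsProbMeas μ) (hirr : MeasIrreducible μ) (k : ℕ) (hk : 1 ≤ k)
    (ρ : G → ℝ) (hρ0 : ∀ g, 0 ≤ ρ g) (hρs : Summable ρ)
    (h : mconv ρ (convPow μ k) = ρ) :
    ρ = 0 := by
  obtain ⟨hμ0, hμ1⟩ := hμ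
  have hμs : Summable μ := hμ1.summable
  set P : G → ℝ≥0∞ := fun g => ENNReal.ofReal (μ g) with hP
  set R : G → ℝ≥0∞ := fun g => ENNReal.ofReal (ρ g) with hRdef
  -- transfer lemma for mconv
  have mconv_transfer : ∀ (ν σ : G → ℝ), (∀ g, 0 ≤ ν g) → Summable ν →
      (∀ g, 0 ≤ σ g) → Summable σ →
      (∀ g, 0 ≤ mconv ν σ g) ∧ Summable (mconv ν σ) ∧
      (fun g => ENNReal.ofReal (mconv ν σ g))
        = econv (fun g => ENNReal.ofReal (ν g)) (fun g => ENNReal.ofReal (σ g)) := by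
    intro ν σ hν0 hνs hσ0 hσs
    have hterm : ∀ g : G, Summable fun a => ν a * σ (a⁻¹ * g) := by
      intro g
      refine Summable.of_nonneg_of_le (fun a => mul_nonneg (hν0 a) (hσ0 _))
        (fun a => mul_le_mul_of_nonneg_left ?_ (hν0 a)) (hνs.mul_right (∑' x, σ x))
      exact Summable.le_tsum hσs _ (fun _ _ => hσ0 _)
    have heq : (fun g => ENNReal.ofReal (mconv ν σ g))
        = econv (fun g => ENNReal.ofReal (ν g)) (fun g => ENNReal.ofReal (σ g)) := by
      funext g
      rw [mconv, econv, ENNReal.ofReal_tsum_of_nonneg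
        (fun a => mul_nonneg (hν0 a) (hσ0 _)) (hterm g)]
      congr 1
      funext a
      exact ENNReal.ofReal_mul (hν0 a)
    refine ⟨fun g => tsum_nonneg fun a => mul_nonneg (hν0 a) (hσ0 _), ?_, heq⟩
    -- summability via ENNReal
    have hmasstop : ∑' g, ENNReal.ofReal (mconv ν σ g) ≠ ⊤ := by
      rw [show (fun g => ENNReal.ofReal (mconv ν σ g)) = _ from heq] at *
      rw [econv_mass]
      rw [← ENNReal.ofReal_tsum_of_nonneg hν0 hνs, ← ENNReal.ofReal_tsum_of_nonneg hσ0 hσs]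
      exact (ENNReal.mul_lt_top ENNReal.ofReal_lt_top ENNReal.ofReal_lt_top).ne
    have := ENNReal.summable_toReal hmasstop
    refine this.congr fun g => ?_
    exact ENNReal.toReal_ofReal (tsum_nonneg fun a => mul_nonneg (hν0 a) (hσ0 _))
  -- transfer for convPow
  have convPow_transfer : ∀ n : ℕ, (∀ g, 0 ≤ convPow μ n g) ∧ Summable (convPow μ n) ∧
      (fun g => ENNReal.ofReal (convPow μ n g)) = epow P n := by
    intro n
    induction n with
    | zero =>
      refine ⟨fun g => by dsimp [convPow]; split <;> norm_num, ?_, ?_⟩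
      · exact summable_of_ne_finset_zero (s := {1}) fun b hb => by
          simp only [Finset.mem_singleton] at hb
          simp [convPow, hb]
      · funext g
        dsimp [convPow, epow]
        split <;> simp
    | succ n ih =>
      obtain ⟨h0, hsum, heq⟩ := ih
      obtain ⟨h0', hsum', heq'⟩ := mconv_transfer (convPow μ n) μ h0 hsum hμ0 hμs
      refine ⟨h0', hsum', ?_⟩
      show (fun g => ENNReal.ofReal (mconv (convPow μ n) μ g)) = econv (epow P n) P
      rw [heq', heq]
  -- hypotheses of the ENNReal lemma
  have hPmass : ∑' g, P g = 1 := by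
    rw [hP, ← ENNReal.ofReal_tsum_of_nonneg hμ0 hμs, hμ1.tsum_eq]
    simp
  have hirr' : ∀ g : G, ∃ n : ℕ, 1 ≤ n ∧ 0 < epow P n g := by
    intro g
    obtain ⟨n, hn1, hnpos⟩ := hirr g
    refine ⟨n, hn1, ?_⟩
    rw [← (convPow_transfer n).2.2]
    exact ENNReal.ofReal_pos.mpr hnpos
  have hRtop : ∑' g, R g ≠ ⊤ := by
    rw [hRdef, ← ENNReal.ofReal_tsum_of_nonneg hρ0 hρs]
    exact ENNReal.ofReal_ne_top
  have hRstat : econv R (epow P k) = R := by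
    obtain ⟨h0, hsum, heq⟩ := convPow_transfer k
    obtain ⟨_, _, heq'⟩ := mconv_transfer ρ (convPow μ k) hρ0 hρs h0 hsum
    rw [← heq, ← heq']
    funext g
    rw [h]
  have hR0 := ennreal_stationary_vanishes P hPmass hirr' k hk R hRtop hRstat
  funext g
  have : R g = 0 := by rw [hR0]; rfl
  rw [hRdef] at this
  exact le_antisymm (ENNReal.ofReal_eq_zero.mp this) (hρ0 g)
end
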